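/- For any unifiable atoms α and β (where β is the head of a rule with variables disjoint from α, in a language whose only function symbols are addition of integer constants to temporal variables), there exists a most general unifier θ = [X₁:=t₁,…,Xₙ:=tₙ] such that every variable occurring in t₁,…,tₙ also occurs in α. -/

import Mathlib

/-- Terms of Temporal Datalog: object constants, object variables, time points,
and time expressions `T + k` for a time variable `T` and integer `k`. -/
inductive Tm where
  | const : ℕ → Tm
  | var : ℕ → Tm
  | timeConst : ℤ → Tm
  | timeVar : ℕ → ℤ → Tm
deriving DecidableEq

/-- Substitutions: (finitely supported) functions from variables to terms. -/
abbrev Subst : Type := ℕ → Tm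

/-- The identity substitution, given a sort assignment (`true` = temporal). -/
def idTm (sortOf : ℕ → Bool) (v : ℕ) : Tm :=
  if sortOf v then Tm.timeVar v 0 else Tm.var v

/-- Adding an integer constant to a time term (evaluating additions). -/
def Tm.shift : Tm → ℤ → Tm
  | .timeConst n, k => .timeConst (n + k)
  | .timeVar v j, k => .timeVar v (j + k)
  | t, _ => t

/-- Applying a substitution to a term, evaluating temporal additions. -/
def Tm.applySubst (σ : Subst) : Tm → Tm
  | .const c => .const c
  | .var v => σ v
  | .timeConst n => .timeConst n
  | .timeVar v k => (σ v).shift k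

/-- Composition of substitutions (simultaneous application; deletion of trivial
and shadowed bindings is extensionally invisible for functions). -/
def Subst.comp (θ σ : Subst) : Subst := fun v => (θ v).applySubst σ

/-- Variables occurring in a term. -/
def Tm.vars : Tm → Set ℕ
  | .var v => {v}
  | .timeVar v _ => {v}
  | _ => ∅

def Tm.isGround (t : Tm) : Prop := t.vars = ∅

/-- Atoms `P(t₁,…,tₙ)`. -/
structure Atom where
  pred : ℕ
  args : List Tm
deriving DecidableEq

def Atom.applySubst (σ : Subst) (a : Atom) : Atom := ⟨a.pred, a.args.map (Tm.applySubst σ)⟩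

def Atom.vars (a : Atom) : Set ℕ := {v | ∃ t ∈ a.args, v ∈ t.vars}

def Atom.isGround (a : Atom) : Prop := ∀ t ∈ a.args, t.isGround

/-- `θ` unifies atoms `a` and `b`. -/
def IsUnifier (θ : Subst) (a b : Atom) : Prop := a.applySubst θ = b.applySubst θ

/-- `θ` is a most general unifier of `a` and `b`: a unifier through which every
unifier factors. -/
def IsMgu (θ : Subst) (a b : Atom) : Prop :=
  IsUnifier θ a b ∧ ∀ σ, IsUnifier σ a b → ∃ γ, σ = θ.comp γ

namespace MguAux

def inert (t : Tm) : Prop := ∀ k, t.shift k = t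

lemma inert_const (c : ℕ) : inert (Tm.const c) := fun _ => rfl
lemma inert_var (v : ℕ) : inert (Tm.var v) := fun _ => rfl

lemma shift_zero (t : Tm) : t.shift 0 = t := by cases t <;> simp [Tm.shift]

lemma shift_shift (t : Tm) (j k : ℤ) : (t.shift j).shift k = t.shift (j + k) := by
  cases t <;> simp [Tm.shift] <;> ring

lemma inert_of_shift_eq {x : Tm} {j m : ℤ} (h : j ≠ m) (hx : x.shift j = x.shift m) :
    inert x := by
  cases x with
  | const c => intro k; rfl
  | var v => intro k; rfl
  | timeConst n => simp [Tm.shift] at hx; omega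
  | timeVar v p => simp [Tm.shift] at hx; omega

lemma inert_of_inert_shift {x : Tm} {j : ℤ} (h : inert (x.shift j)) : inert x := by
  cases x with
  | const c => intro k; rfl
  | var v => intro k; rfl
  | timeConst n => have := h 1; simp [Tm.shift] at this
  | timeVar v m => have := h 1; simp [Tm.shift] at this

lemma shift_cancel {x y : Tm} {j m : ℤ} (h : x.shift j = y.shift m) :
    x = y.shift (m - j) := by
  have := congrArg (fun t => Tm.shift t (-j)) h
  simpa [shift_shift, shift_zero, sub_eq_add_neg] using this

lemma eq_const_of_shift {x : Tm} {j : ℤ} {c : ℕ} (h : x.shift j = .const c) :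
    x = .const c := by cases x <;> simp_all [Tm.shift]

lemma eq_timeConst_of_shift {x : Tm} {j n : ℤ} (h : x.shift j = .timeConst n) :
    x = .timeConst (n - j) := by cases x <;> simp_all [Tm.shift] <;> omega

lemma eq_var_of_shift {x : Tm} {j : ℤ} {w : ℕ} (h : x.shift j = .var w) :
    x = .var w := by cases x <;> simp_all [Tm.shift]

lemma eq_timeVar_of_shift {x : Tm} {j m : ℤ} {w : ℕ} (h : x.shift j = .timeVar w m) :
    x = .timeVar w (m - j) := by cases x <;> simp_all [Tm.shift] <;> omega

lemma applySubst_idTm (sortOf : ℕ → Bool) (σ : Subst) (v : ℕ) :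
    (idTm sortOf v).applySubst σ = σ v := by
  unfold idTm; split <;> simp [Tm.applySubst, shift_zero]

lemma applySubst_shift (σ : Subst) (x : Tm) (k : ℤ)
    (hx : ∀ w, x = .var w → inert (σ w)) :
    (x.shift k).applySubst σ = (x.applySubst σ).shift k := by
  cases x with
  | const c => simp [Tm.shift, Tm.applySubst]
  | var w => simpa [Tm.shift, Tm.applySubst] using ((hx w rfl) k).symm
  | timeConst n => simp [Tm.shift, Tm.applySubst]
  | timeVar w m => show (σ w).shift (m + k) = ((σ w).shift m).shift k
                   rw [shift_shift]


/-- Replace the (root) variable `u` by the term `t'`, sort-aware. -/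
def repl (u : ℕ) (t' : Tm) : Tm → Tm
  | .var v => if v = u then t' else .var v
  | .timeVar v k => if v = u then t'.shift k else .timeVar v k
  | x => x

section Main

variable (sortOf : ℕ → Bool) (A Rel : Set ℕ) (U : Set Subst)

/-- Invariant on the partial solution `θ`.  `D` is the set of variables known to be
forced inert ("demoted"), `lic` the set of variables still licensed to be
promoted temporal roots besides those of `A`. -/
structure Good (θ : Subst) (D lic : Set ℕ) : Prop where
  shape : ∀ v, θ v = idTm sortOf v ∨
    (θ v = .timeVar v 0 ∧ (v ∈ A ∨ v ∈ lic)) ∨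
    (∃ c, θ v = .const c) ∨
    (∃ n, θ v = .timeConst n) ∨
    (∃ w, θ v = .var w ∧ w ∈ A ∧ w ∈ D ∧ θ w = .var w) ∨
    (∃ w k, θ v = .timeVar w k ∧ w ∈ A ∧ θ w = .timeVar w 0)
  pro : ∀ v ∈ Rel, θ v = .var v → v ∈ A ∧ v ∈ D
  ent : ∀ σ ∈ U, ∀ v, σ v = (θ v).applySubst σ
  dem : ∀ v ∈ D, ∀ σ ∈ U, inert (σ v)

variable {sortOf A Rel U}

/-- Substituted terms are semantically unchanged for unifiers in `U`. -/
lemma transport {θ : Subst} {D lic : Set ℕ} (g : Good sortOf A Rel U θ D lic)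
    {σ : Subst} (hσ : σ ∈ U) (t : Tm) (ht : t.vars ⊆ Rel) :
    (t.applySubst θ).applySubst σ = t.applySubst σ := by
  cases t with
  | const c => rfl
  | timeConst n => rfl
  | var v => exact (g.ent σ hσ v).symm
  | timeVar v k =>
    have hv : v ∈ Rel := ht (by simp [Tm.vars])
    show ((θ v).shift k).applySubst σ = (σ v).shift k
    rw [g.ent σ hσ v]
    rcases g.shape v with h1 | ⟨h2, _⟩ | ⟨c, h3⟩ | ⟨n, h4⟩ | ⟨w, h5, _, hwD, _⟩ | ⟨w, m, h6, _, _⟩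
    · by_cases hs : sortOf v
      · rw [h1]; simp only [idTm, hs, if_true]
        show (σ v).shift (0 + k) = ((σ v).shift 0).shift k
        rw [shift_shift]
      · have hvv : θ v = .var v := by rw [h1]; simp [idTm, hs]
        obtain ⟨_, hvD⟩ := g.pro v hv hvv
        rw [hvv]
        show σ v = (σ v).shift k
        exact (g.dem v hvD σ hσ k).symm
    · rw [h2]
      show (σ v).shift (0 + k) = ((σ v).shift 0).shift k
      rw [shift_shift]
    · rw [h3]; rfl
    · rw [h4]
      show Tm.timeConst (n + k) = ((Tm.timeConst n).applySubst σ).shift k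
      rfl
    · rw [h5]
      show σ w = (σ w).shift k
      exact (g.dem w hwD σ hσ k).symm
    · rw [h6]
      show (σ w).shift (m + k) = ((σ w).shift m).shift k
      rw [shift_shift]

/-- Substituted terms are in "resolved" form. -/
lemma resolve {θ : Subst} {D lic : Set ℕ} (g : Good sortOf A Rel U θ D lic)
    (t : Tm) (ht : t.vars ⊆ Rel) :
    (∃ c, t.applySubst θ = .const c) ∨ (∃ n, t.applySubst θ = .timeConst n) ∨
    (∃ w, t.applySubst θ = .var w ∧ w ∈ A ∧ w ∈ D ∧ θ w = .var w) ∨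
    (∃ w k, t.applySubst θ = .timeVar w k ∧ θ w = .timeVar w 0 ∧ (w ∈ A ∨ w ∈ t.vars)) := by
  cases t with
  | const c => exact Or.inl ⟨c, rfl⟩
  | timeConst n => exact Or.inr (Or.inl ⟨n, rfl⟩)
  | var v =>
    have hv : v ∈ Rel := ht (by simp [Tm.vars])
    have hself : (v : ℕ) ∈ (Tm.var v).vars := by simp [Tm.vars]
    show _ ∨ _ ∨ (∃ w, θ v = _ ∧ _) ∨ (∃ w k, θ v = _ ∧ _)
    rcases g.shape v with h1 | ⟨h2, _⟩ | ⟨c, h3⟩ | ⟨n, h4⟩ | ⟨w, h5, hwA, hwD, hww⟩ | ⟨w, m, h6, hwA, hw0⟩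
    · by_cases hs : sortOf v
      · have : θ v = .timeVar v 0 := by rw [h1]; simp [idTm, hs]
        exact Or.inr (Or.inr (Or.inr ⟨v, 0, this, this, Or.inr hself⟩))
      · have hvv : θ v = .var v := by rw [h1]; simp [idTm, hs]
        obtain ⟨hvA, hvD⟩ := g.pro v hv hvv
        exact Or.inr (Or.inr (Or.inl ⟨v, hvv, hvA, hvD, hvv⟩))
    · exact Or.inr (Or.inr (Or.inr ⟨v, 0, h2, h2, Or.inr hself⟩))
    · exact Or.inl ⟨c, h3⟩
    · exact Or.inr (Or.inl ⟨n, h4⟩)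
    · exact Or.inr (Or.inr (Or.inl ⟨w, h5, hwA, hwD, hww⟩))
    · exact Or.inr (Or.inr (Or.inr ⟨w, m, h6, hw0, Or.inl hwA⟩))
  | timeVar v k =>
    have hv : v ∈ Rel := ht (by simp [Tm.vars])
    have hself : (v : ℕ) ∈ (Tm.timeVar v k).vars := by simp [Tm.vars]
    show _ ∨ _ ∨ (∃ w, (θ v).shift k = _ ∧ _) ∨ (∃ w d, (θ v).shift k = _ ∧ _)
    rcases g.shape v with h1 | ⟨h2, _⟩ | ⟨c, h3⟩ | ⟨n, h4⟩ | ⟨w, h5, hwA, hwD, hww⟩ | ⟨w, m, h6, hwA, hw0⟩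
    · by_cases hs : sortOf v
      · have h2 : θ v = .timeVar v 0 := by rw [h1]; simp [idTm, hs]
        refine Or.inr (Or.inr (Or.inr ⟨v, 0 + k, ?_, h2, Or.inr hself⟩))
        rw [h2]; rfl
      · have hvv : θ v = .var v := by rw [h1]; simp [idTm, hs]
        obtain ⟨hvA, hvD⟩ := g.pro v hv hvv
        exact Or.inr (Or.inr (Or.inl ⟨v, by rw [hvv]; rfl, hvA, hvD, hvv⟩))
    · exact Or.inr (Or.inr (Or.inr ⟨v, 0 + k, by rw [h2]; rfl, h2, Or.inr hself⟩))
    · exact Or.inl ⟨c, by simp [Tm.applySubst, h3, Tm.shift]⟩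
    · exact Or.inr (Or.inl ⟨n + k, by simp [Tm.applySubst, h4, Tm.shift]⟩)
    · exact Or.inr (Or.inr (Or.inl ⟨w, by rw [h5]; rfl, hwA, hwD, hww⟩))
    · exact Or.inr (Or.inr (Or.inr ⟨w, m + k, by rw [h6]; rfl, hw0, Or.inl hwA⟩))


lemma repl_ent {σ : Subst} {u : ℕ} {t' : Tm}
    (h1 : σ u = t'.applySubst σ)
    (hw : ∀ w, t' = .var w → inert (σ w)) (x : Tm) :
    (repl u t' x).applySubst σ = x.applySubst σ := by
  cases x with
  | const c => rfl
  | timeConst n => rfl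
  | var w =>
    show (if w = u then t' else Tm.var w).applySubst σ = σ w
    by_cases hwu : w = u
    · rw [if_pos hwu, hwu]; exact h1.symm
    · rw [if_neg hwu]; rfl
  | timeVar w m =>
    show (if w = u then t'.shift m else Tm.timeVar w m).applySubst σ = (σ w).shift m
    by_cases hwu : w = u
    · rw [if_pos hwu, hwu, applySubst_shift σ t' m hw, ← h1]
    · rw [if_neg hwu]; rfl

lemma repl_shift {u : ℕ} {t' : Tm} (x : Tm) (k : ℤ)
    (hx : x = .var u → inert t') :
    repl u t' (x.shift k) = (repl u t' x).shift k := by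
  cases x with
  | const c => rfl
  | timeConst n => rfl
  | var w =>
    show repl u t' (Tm.var w) = (repl u t' (Tm.var w)).shift k
    by_cases hwu : w = u
    · have hi := hx (by rw [hwu])
      simp [repl, if_pos hwu, hi k]
    · simp [repl, if_neg hwu, Tm.shift]
  | timeVar w m =>
    show repl u t' (Tm.timeVar w (m + k)) = (repl u t' (Tm.timeVar w m)).shift k
    by_cases hwu : w = u
    · simp [repl, if_pos hwu, shift_shift]
    · simp [repl, if_neg hwu, Tm.shift]

/-- The main update step: binding a root `u` to a resolved term `t'`. -/
lemma step {θ : Subst} {D lic : Set ℕ} (g : Good sortOf A Rel U θ D lic)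
    {u : ℕ} {t' : Tm} {D' : Set ℕ} (hDD' : D ⊆ D')
    (b1 : θ u = .timeVar u 0 ∨ θ u = .var u)
    (b2 : ∀ σ ∈ U, σ u = t'.applySubst σ)
    (b3 : (∃ c, t' = .const c) ∨ (∃ n, t' = .timeConst n ∧ θ u = .timeVar u 0) ∨
          (∃ w, t' = .var w ∧ w ∈ A ∧ w ∈ D' ∧ (w ≠ u → θ w = .var w)) ∨
          (∃ w d, t' = .timeVar w d ∧ w ∈ A ∧ w ≠ u ∧ θ w = .timeVar w 0))
    (b4 : θ u = .var u → inert t')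
    (b5 : ∀ v ∈ D', ∀ σ ∈ U, inert (σ v)) :
    Good sortOf A Rel U (fun v => repl u t' (θ v)) D' lic ∧
    ∀ t : Tm, t.applySubst (fun v => repl u t' (θ v)) = repl u t' (t.applySubst θ) := by
  set θ' : Subst := fun v => repl u t' (θ v) with hθ'
  -- any variable mapped to `var u` forces `t'` inert
  have hvu : ∀ v, θ v = .var u → inert t' := by
    intro v hv
    rcases g.shape v with h1 | ⟨h2, _⟩ | ⟨c, h3⟩ | ⟨n, h4⟩ | ⟨w, h5, _, _, hww⟩ | ⟨w, m, h6, _, _⟩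
    · rw [hv] at h1
      unfold idTm at h1
      split at h1
      · exact absurd h1 (by simp)
      · have huv : u = v := by simpa using h1
        exact b4 (huv ▸ hv)
    · rw [hv] at h2; exact absurd h2 (by simp)
    · rw [hv] at h3; exact absurd h3.symm (by simp)
    · rw [hv] at h4; exact absurd h4.symm (by simp)
    · rw [hv] at h5
      have huw : u = w := by simpa using h5
      subst huw
      exact b4 hww
    · rw [hv] at h6; exact absurd h6.symm (by simp)
  have happ : ∀ t : Tm, t.applySubst θ' = repl u t' (t.applySubst θ) := by
    intro t
    cases t with
    | const c => rfl
    | timeConst n => rfl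
    | var v => rfl
    | timeVar v k =>
      show (θ' v).shift k = repl u t' ((θ v).shift k)
      rw [repl_shift (θ v) k (hvu v)]
  have hu' : θ' u = t' := by
    show repl u t' (θ u) = t'
    rcases b1 with h | h
    · rw [h]; simp [repl, shift_zero]
    · rw [h]; simp [repl]
  have htvar : ∀ w, t' = .var w → θ' w = .var w ∧ w ∈ A ∧ w ∈ D' := by
    intro w hw
    rcases b3 with ⟨c, h⟩ | ⟨n, h, _⟩ | ⟨w', h, hA, hD, hr⟩ | ⟨w', d, h, _, _, _⟩
    · rw [hw] at h; exact absurd h (by simp)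
    · rw [hw] at h; exact absurd h (by simp)
    · rw [hw] at h
      have hww' : w = w' := by simpa using h
      subst hww'
      by_cases hwu : w = u
      · exact ⟨by rw [hwu, hu', hw, hwu], hA, hD⟩
      · refine ⟨?_, hA, hD⟩
        show repl u t' (θ w) = .var w
        rw [hr hwu]; simp [repl, if_neg hwu]
    · rw [hw] at h; exact absurd h (by simp)
  have httv : ∀ w d, t' = .timeVar w d → θ' w = .timeVar w 0 ∧ w ∈ A := by
    intro w d hw
    rcases b3 with ⟨c, h⟩ | ⟨n, h, _⟩ | ⟨w', h, _, _, _⟩ | ⟨w', d', h, hA, hne, hr⟩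
    · rw [hw] at h; exact absurd h (by simp)
    · rw [hw] at h; exact absurd h (by simp)
    · rw [hw] at h; exact absurd h (by simp)
    · rw [hw] at h
      obtain ⟨hww', -⟩ : w = w' ∧ d = d' := by simpa using h
      subst hww'
      refine ⟨?_, hA⟩
      show repl u t' (θ w) = .timeVar w 0
      rw [hr]; simp [repl, if_neg hne]
  have ht'shape : (∃ c, t' = .const c) ∨ (∃ n, t' = .timeConst n) ∨
      (∃ w, t' = .var w ∧ w ∈ A ∧ w ∈ D' ∧ θ' w = .var w) ∨
      (∃ w d, t' = .timeVar w d ∧ w ∈ A ∧ θ' w = .timeVar w 0) := by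
    rcases b3 with ⟨c, h⟩ | ⟨n, h, _⟩ | ⟨w, h, _, _, _⟩ | ⟨w, d, h, _, _, _⟩
    · exact Or.inl ⟨c, h⟩
    · exact Or.inr (Or.inl ⟨n, h⟩)
    · obtain ⟨h1, h2, h3⟩ := htvar w h
      exact Or.inr (Or.inr (Or.inl ⟨w, h, h2, h3, h1⟩))
    · obtain ⟨h1, h2⟩ := httv w d h
      exact Or.inr (Or.inr (Or.inr ⟨w, d, h, h2, h1⟩))
  have ht'shift : ∀ p : ℤ, (∃ c, t'.shift p = .const c) ∨ (∃ n, t'.shift p = .timeConst n) ∨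
      (∃ w, t'.shift p = .var w ∧ w ∈ A ∧ w ∈ D' ∧ θ' w = .var w) ∨
      (∃ w d, t'.shift p = .timeVar w d ∧ w ∈ A ∧ θ' w = .timeVar w 0) := by
    intro p
    rcases ht'shape with ⟨c, h⟩ | ⟨n, h⟩ | ⟨w, h, h2, h3, h4⟩ | ⟨w, d, h, h2, h3⟩
    · exact Or.inl ⟨c, by rw [h]; rfl⟩
    · exact Or.inr (Or.inl ⟨n + p, by rw [h]; rfl⟩)
    · exact Or.inr (Or.inr (Or.inl ⟨w, by rw [h]; rfl, h2, h3, h4⟩))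
    · exact Or.inr (Or.inr (Or.inr ⟨w, d + p, by rw [h]; rfl, h2, h3⟩))
  have hshift4 : ∀ (v : ℕ) (p : ℤ), θ' v = t'.shift p →
      θ' v = idTm sortOf v ∨ (θ' v = .timeVar v 0 ∧ (v ∈ A ∨ v ∈ lic)) ∨
      (∃ c, θ' v = .const c) ∨ (∃ n, θ' v = .timeConst n) ∨
      (∃ w, θ' v = .var w ∧ w ∈ A ∧ w ∈ D' ∧ θ' w = .var w) ∨
      (∃ w k, θ' v = .timeVar w k ∧ w ∈ A ∧ θ' w = .timeVar w 0) := by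
    intro v p hv
    rcases ht'shift p with ⟨c, h⟩ | ⟨n, h⟩ | ⟨w, h, p2, p3, p4⟩ | ⟨w, d, h, p2, p3⟩
    · exact Or.inr (Or.inr (Or.inl ⟨c, by rw [hv, h]⟩))
    · exact Or.inr (Or.inr (Or.inr (Or.inl ⟨n, by rw [hv, h]⟩)))
    · exact Or.inr (Or.inr (Or.inr (Or.inr (Or.inl ⟨w, by rw [hv, h], p2, p3, p4⟩))))
    · exact Or.inr (Or.inr (Or.inr (Or.inr (Or.inr ⟨w, d, by rw [hv, h], p2, p3⟩))))
  constructor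
  · constructor
    · -- shape
      intro v
      rcases g.shape v with h1 | ⟨h2, hlic⟩ | ⟨c, h3⟩ | ⟨n, h4⟩ | ⟨w, h5, hwA, hwD, hww⟩ | ⟨w, m, h6, hwA, hw0⟩
      · by_cases hvu' : v = u
        · refine hshift4 v 0 ?_
          rw [hvu', hu', shift_zero]
        · left
          show repl u t' (θ v) = idTm sortOf v
          rw [h1]
          unfold idTm
          split
          · simp [repl, if_neg hvu']
          · simp [repl, if_neg hvu']
      · by_cases hvu' : v = u
        · refine hshift4 v 0 ?_
          rw [hvu', hu', shift_zero]
        · refine Or.inr (Or.inl ⟨?_, hlic⟩)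
          show repl u t' (θ v) = .timeVar v 0
          rw [h2]; simp [repl, if_neg hvu']
      · refine Or.inr (Or.inr (Or.inl ⟨c, ?_⟩))
        show repl u t' (θ v) = .const c
        rw [h3]; rfl
      · refine Or.inr (Or.inr (Or.inr (Or.inl ⟨n, ?_⟩)))
        show repl u t' (θ v) = .timeConst n
        rw [h4]; rfl
      · by_cases hwu : w = u
        · refine hshift4 v 0 ?_
          show repl u t' (θ v) = t'.shift 0
          rw [h5, shift_zero]; simp [repl, if_pos hwu]
        · refine Or.inr (Or.inr (Or.inr (Or.inr (Or.inl ⟨w, ?_, hwA, hDD' hwD, ?_⟩))))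
          · show repl u t' (θ v) = .var w
            rw [h5]; simp [repl, if_neg hwu]
          · show repl u t' (θ w) = .var w
            rw [hww]; simp [repl, if_neg hwu]
      · by_cases hwu : w = u
        · refine hshift4 v m ?_
          show repl u t' (θ v) = t'.shift m
          rw [h6]; simp [repl, if_pos hwu]
        · refine Or.inr (Or.inr (Or.inr (Or.inr (Or.inr ⟨w, m, ?_, hwA, ?_⟩))))
          · show repl u t' (θ v) = .timeVar w m
            rw [h6]; simp [repl, if_neg hwu]
          · show repl u t' (θ w) = .timeVar w 0
            rw [hw0]; simp [repl, if_neg hwu]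
    · -- pro
      intro v hv hv'
      have hv'' : repl u t' (θ v) = .var v := hv'
      cases hx : θ v with
      | const c => rw [hx] at hv''; exact absurd hv'' (by simp [repl])
      | timeConst n => rw [hx] at hv''; exact absurd hv'' (by simp [repl])
      | var w =>
        rw [hx] at hv''
        by_cases hwu : w = u
        · rw [show repl u t' (Tm.var w) = t' from by simp [repl, if_pos hwu]] at hv''
          obtain ⟨_, hA, hD⟩ := htvar v hv''
          exact ⟨hA, hD⟩
        · rw [show repl u t' (Tm.var w) = Tm.var w from by simp [repl, if_neg hwu]] at hv''
          have hwv : w = v := by simpa using hv''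
          subst hwv
          obtain ⟨hA, hD⟩ := g.pro w hv hx
          exact ⟨hA, hDD' hD⟩
      | timeVar w m =>
        rw [hx] at hv''
        by_cases hwu : w = u
        · rw [show repl u t' (Tm.timeVar w m) = t'.shift m from by simp [repl, if_pos hwu]] at hv''
          have ht'v : t' = .var v := eq_var_of_shift hv''
          obtain ⟨_, hA, hD⟩ := htvar v ht'v
          exact ⟨hA, hD⟩
        · rw [show repl u t' (Tm.timeVar w m) = Tm.timeVar w m from by simp [repl, if_neg hwu]] at hv''
          exact absurd hv'' (by simp)
    · -- ent
      intro σ hσ v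
      have hinert : ∀ w, t' = .var w → inert (σ w) := by
        intro w hw
        obtain ⟨_, _, hD⟩ := htvar w hw
        exact b5 w hD σ hσ
      calc σ v = (θ v).applySubst σ := g.ent σ hσ v
        _ = (repl u t' (θ v)).applySubst σ := (repl_ent (b2 σ hσ) hinert (θ v)).symm
    · -- dem
      exact b5
  · exact happ


lemma lic_noop {A Rel : Set ℕ} {θ : Subst} (r : Tm)
    (hA : ∀ w m, r.applySubst θ = Tm.timeVar w m → w ∈ A) :
    ∀ v ∈ r.vars, θ v = Tm.timeVar v 0 → v ∈ A := by
  intro v hv hx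
  cases r with
  | const c => simp [Tm.vars] at hv
  | timeConst n => simp [Tm.vars] at hv
  | var x =>
    have hvx : v = x := by simpa [Tm.vars] using hv
    subst hvx
    exact hA v 0 (show θ v = _ by rw [hx])
  | timeVar x k =>
    have hvx : v = x := by simpa [Tm.vars] using hv
    subst hvx
    exact hA v (0 + k) (show (θ v).shift k = _ by rw [hx]; rfl)

lemma lic_after {A : Set ℕ} {θ : Subst} {u : ℕ} {t' : Tm} (r : Tm)
    (ht' : ∀ w d, t' = Tm.timeVar w d → w ∈ A)
    (hA : ∀ w m, r.applySubst θ = Tm.timeVar w m → (w ∈ A ∨ w = u)) :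
    ∀ v ∈ r.vars, repl u t' (θ v) = Tm.timeVar v 0 → v ∈ A := by
  intro v hv hrepl
  have hAx : θ v = Tm.timeVar v 0 → v ∈ A ∨ v = u := by
    intro hx
    cases r with
    | const c => simp [Tm.vars] at hv
    | timeConst n => simp [Tm.vars] at hv
    | var x =>
      have hvx : v = x := by simpa [Tm.vars] using hv
      subst hvx
      exact hA v 0 (show θ v = _ by rw [hx])
    | timeVar x k =>
      have hvx : v = x := by simpa [Tm.vars] using hv
      subst hvx
      exact hA v (0 + k) (show (θ v).shift k = _ by rw [hx]; rfl)
  cases hx : θ v with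
  | const c => rw [hx] at hrepl; exact absurd hrepl (by simp [repl])
  | timeConst n => rw [hx] at hrepl; exact absurd hrepl (by simp [repl])
  | var w =>
    rw [hx] at hrepl
    by_cases hwu : w = u
    · rw [show repl u t' (Tm.var w) = t' from by simp [repl, if_pos hwu]] at hrepl
      exact ht' v 0 hrepl
    · rw [show repl u t' (Tm.var w) = Tm.var w from by simp [repl, if_neg hwu]] at hrepl
      exact absurd hrepl (by simp)
  | timeVar w m =>
    rw [hx] at hrepl
    by_cases hwu : w = u
    · rw [show repl u t' (Tm.timeVar w m) = t'.shift m from by simp [repl, if_pos hwu]] at hrepl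
      exact ht' v (0 - m) (eq_timeVar_of_shift hrepl)
    · rw [show repl u t' (Tm.timeVar w m) = Tm.timeVar w m from by simp [repl, if_neg hwu]] at hrepl
      obtain ⟨hw1, hw2⟩ : w = v ∧ m = 0 := by simpa using hrepl
      subst hw1; subst hw2
      rcases hAx hx with h | h
      · exact h
      · exact absurd h hwu

lemma process {θ : Subst} {D lic : Set ℕ} {σ₀ : Subst} (g : Good sortOf A Rel U θ D lic)
    (hσ₀ : σ₀ ∈ U) (hAR : A ⊆ Rel) (l r : Tm)
    (hlA : l.vars ⊆ A) (hrR : r.vars ⊆ Rel)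
    (hUeq : ∀ σ ∈ U, l.applySubst σ = r.applySubst σ) :
    ∃ (θ' : Subst) (D' : Set ℕ), Good sortOf A Rel U θ' D' lic ∧
      l.applySubst θ' = r.applySubst θ' ∧
      (∀ t1 t2 : Tm, t1.applySubst θ = t2.applySubst θ →
        t1.applySubst θ' = t2.applySubst θ') ∧
      (∀ v ∈ r.vars, θ' v = Tm.timeVar v 0 → v ∈ A) := by
  have hlR : l.vars ⊆ Rel := fun v hv => hAR (hlA hv)
  have hstar : ∀ σ ∈ U, (l.applySubst θ).applySubst σ = (r.applySubst θ).applySubst σ := by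
    intro σ hσ
    rw [transport g hσ l hlR, transport g hσ r hrR]
    exact hUeq σ hσ
  by_cases hlr : l.applySubst θ = r.applySubst θ
  · refine ⟨θ, D, g, hlr, fun t1 t2 h => h, ?_⟩
    refine lic_noop (Rel := Rel) r ?_
    intro w m hr'
    rcases resolve g l hlR with ⟨c, hl'⟩ | ⟨n, hl'⟩ | ⟨w', hl', _, _, _⟩ | ⟨w', m', hl', _, hw'⟩
    · rw [hlr, hr'] at hl'; exact absurd hl' (by simp)
    · rw [hlr, hr'] at hl'; exact absurd hl' (by simp)
    · rw [hlr, hr'] at hl'; exact absurd hl' (by simp)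
    · rw [hlr, hr'] at hl'
      obtain ⟨h1, -⟩ : w = w' ∧ m = m' := by simpa using hl'
      rcases hw' with h | h
      · exact h1 ▸ h
      · exact h1 ▸ hlA h
  · rcases resolve g l hlR with ⟨cL, hl'⟩ | ⟨nL, hl'⟩ | ⟨wL, hl', hLA, hLD, hLr⟩ | ⟨wL, jL, hl', hLr, hLA'⟩
    all_goals rcases resolve g r hrR with ⟨cR, hr'⟩ | ⟨nR, hr'⟩ | ⟨wR, hr', hRA, hRD, hRr⟩ | ⟨wR, mR, hr', hRr, hRA'⟩
    -- L1R1 : const / const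
    · have h0 := hstar σ₀ hσ₀
      rw [hl', hr'] at h0
      have : cL = cR := by simpa [Tm.applySubst] using h0
      exact absurd (by rw [hl', hr', this]) hlr
    -- L1R2 : const / timeConst
    · have h0 := hstar σ₀ hσ₀
      rw [hl', hr'] at h0
      exact absurd h0 (by simp [Tm.applySubst])
    -- L1R3 : const / var
    · have he : ∀ σ ∈ U, σ wR = (Tm.const cL).applySubst σ := by
        intro σ hσ
        have h0 := hstar σ hσ
        rw [hl', hr'] at h0
        exact h0.symm
      obtain ⟨g', happ⟩ := step g (le_refl D) (Or.inr hRr) he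
        (Or.inl ⟨cL, rfl⟩) (fun _ => inert_const cL) g.dem
      refine ⟨_, D, g', ?_, ?_, ?_⟩
      · rw [happ l, happ r, hl', hr']; simp [repl]
      · intro t1 t2 h; rw [happ t1, happ t2, h]
      · refine lic_after r ?_ ?_
        · intro w d h; exact absurd h (by simp)
        · intro w m h; rw [hr'] at h; exact absurd h (by simp)
    -- L1R4 : const / timeVar
    · have he : ∀ σ ∈ U, σ wR = (Tm.const cL).applySubst σ := by
        intro σ hσ
        have h0 := hstar σ hσ
        rw [hl', hr'] at h0
        exact eq_const_of_shift h0.symm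
      obtain ⟨g', happ⟩ := step g (le_refl D) (Or.inl hRr) he
        (Or.inl ⟨cL, rfl⟩) (fun _ => inert_const cL) g.dem
      refine ⟨_, D, g', ?_, ?_, ?_⟩
      · rw [happ l, happ r, hl', hr']; simp [repl, Tm.shift]
      · intro t1 t2 h; rw [happ t1, happ t2, h]
      · refine lic_after r ?_ ?_
        · intro w d h; exact absurd h (by simp)
        · intro w m h; rw [hr'] at h
          obtain ⟨h1, -⟩ : wR = w ∧ mR = m := by simpa using h
          exact Or.inr h1.symm
    -- L2R1 : timeConst / const
    · have h0 := hstar σ₀ hσ₀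
      rw [hl', hr'] at h0
      exact absurd h0 (by simp [Tm.applySubst])
    -- L2R2 : timeConst / timeConst
    · have h0 := hstar σ₀ hσ₀
      rw [hl', hr'] at h0
      have : nL = nR := by simpa [Tm.applySubst] using h0
      exact absurd (by rw [hl', hr', this]) hlr
    -- L2R3 : timeConst / var  (contradiction with inertness)
    · have h0 := hstar σ₀ hσ₀
      rw [hl', hr'] at h0
      have h1 : σ₀ wR = Tm.timeConst nL := h0.symm
      have h2 := g.dem wR hRD σ₀ hσ₀ 1
      rw [h1] at h2
      exact absurd h2 (by simp [Tm.shift])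
    -- L2R4 : timeConst / timeVar
    · have he : ∀ σ ∈ U, σ wR = (Tm.timeConst (nL - mR)).applySubst σ := by
        intro σ hσ
        have h0 := hstar σ hσ
        rw [hl', hr'] at h0
        exact eq_timeConst_of_shift h0.symm
      obtain ⟨g', happ⟩ := step g (le_refl D) (Or.inl hRr) he
        (Or.inr (Or.inl ⟨nL - mR, rfl, hRr⟩))
        (fun h => absurd h (by rw [hRr]; simp)) g.dem
      refine ⟨_, D, g', ?_, ?_, ?_⟩
      · rw [happ l, happ r, hl', hr']
        simp [repl, Tm.shift]
      · intro t1 t2 h; rw [happ t1, happ t2, h]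
      · refine lic_after r ?_ ?_
        · intro w d h; exact absurd h (by simp)
        · intro w m h; rw [hr'] at h
          obtain ⟨h1, -⟩ : wR = w ∧ mR = m := by simpa using h
          exact Or.inr h1.symm
    -- L3R1 : var / const
    · have he : ∀ σ ∈ U, σ wL = (Tm.const cR).applySubst σ := by
        intro σ hσ
        have h0 := hstar σ hσ
        rw [hl', hr'] at h0
        exact h0
      obtain ⟨g', happ⟩ := step g (le_refl D) (Or.inr hLr) he
        (Or.inl ⟨cR, rfl⟩) (fun _ => inert_const cR) g.dem
      refine ⟨_, D, g', ?_, ?_, ?_⟩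
      · rw [happ l, happ r, hl', hr']; simp [repl]
      · intro t1 t2 h; rw [happ t1, happ t2, h]
      · refine lic_after r ?_ ?_
        · intro w d h; exact absurd h (by simp)
        · intro w m h; rw [hr'] at h; exact absurd h (by simp)
    -- L3R2 : var / timeConst  (contradiction)
    · have h0 := hstar σ₀ hσ₀
      rw [hl', hr'] at h0
      have h1 : σ₀ wL = Tm.timeConst nR := h0
      have h2 := g.dem wL hLD σ₀ hσ₀ 1
      rw [h1] at h2
      exact absurd h2 (by simp [Tm.shift])
    -- L3R3 : var / var
    · have hne : wL ≠ wR := fun h => hlr (by rw [hl', hr', h])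
      have he : ∀ σ ∈ U, σ wR = (Tm.var wL).applySubst σ := by
        intro σ hσ
        have h0 := hstar σ hσ
        rw [hl', hr'] at h0
        exact h0.symm
      obtain ⟨g', happ⟩ := step g (le_refl D) (Or.inr hRr) he
        (Or.inr (Or.inr (Or.inl ⟨wL, rfl, hLA, hLD, fun _ => hLr⟩)))
        (fun _ => inert_var wL) g.dem
      refine ⟨_, D, g', ?_, ?_, ?_⟩
      · rw [happ l, happ r, hl', hr']; simp [repl, if_neg hne]
      · intro t1 t2 h; rw [happ t1, happ t2, h]
      · refine lic_after r ?_ ?_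
        · intro w d h; exact absurd h (by simp)
        · intro w m h; rw [hr'] at h; exact absurd h (by simp)
    -- L3R4 : var / timeVar  (demote wR and merge)
    · have hne : wL ≠ wR := by
        intro h
        rw [h] at hLr
        exact absurd (hLr.symm.trans hRr) (by simp)
      have hinertR : ∀ σ ∈ U, inert (σ wR) := by
        intro σ hσ
        have h0 := hstar σ hσ
        rw [hl', hr'] at h0
        have h0' : σ wL = (σ wR).shift mR := h0
        have h1 : inert ((σ wR).shift mR) := by
          rw [← h0']; exact g.dem wL hLD σ hσ
        exact inert_of_inert_shift h1
      have he : ∀ σ ∈ U, σ wR = (Tm.var wL).applySubst σ := by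
        intro σ hσ
        have h0 := hstar σ hσ
        rw [hl', hr'] at h0
        have h0' : σ wL = (σ wR).shift mR := h0
        have h1 : (σ wR).shift mR = σ wR := hinertR σ hσ mR
        show σ wR = σ wL
        rw [h0', h1]
      have hdem' : ∀ v ∈ D ∪ {wR}, ∀ σ ∈ U, inert (σ v) := by
        intro v hv σ hσ
        rcases hv with hv | hv
        · exact g.dem v hv σ hσ
        · have : v = wR := hv
          rw [this]; exact hinertR σ hσ
      obtain ⟨g', happ⟩ := step g Set.subset_union_left (Or.inl hRr) he
        (Or.inr (Or.inr (Or.inl ⟨wL, rfl, hLA, Set.mem_union_left _ hLD, fun _ => hLr⟩)))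
        (fun _ => inert_var wL) hdem'
      refine ⟨_, D ∪ {wR}, g', ?_, ?_, ?_⟩
      · rw [happ l, happ r, hl', hr']; simp [repl, if_neg hne, Tm.shift]
      · intro t1 t2 h; rw [happ t1, happ t2, h]
      · refine lic_after r ?_ ?_
        · intro w d h; exact absurd h (by simp)
        · intro w m h; rw [hr'] at h
          obtain ⟨h1, -⟩ : wR = w ∧ mR = m := by simpa using h
          exact Or.inr h1.symm
    -- L4R1 : timeVar / const
    · have hLA : wL ∈ A := hLA'.elim id (fun h => hlA h)
      have he : ∀ σ ∈ U, σ wL = (Tm.const cR).applySubst σ := by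
        intro σ hσ
        have h0 := hstar σ hσ
        rw [hl', hr'] at h0
        exact eq_const_of_shift h0
      obtain ⟨g', happ⟩ := step g (le_refl D) (Or.inl hLr) he
        (Or.inl ⟨cR, rfl⟩) (fun _ => inert_const cR) g.dem
      refine ⟨_, D, g', ?_, ?_, ?_⟩
      · rw [happ l, happ r, hl', hr']; simp [repl, Tm.shift]
      · intro t1 t2 h; rw [happ t1, happ t2, h]
      · refine lic_after r ?_ ?_
        · intro w d h; exact absurd h (by simp)
        · intro w m h; rw [hr'] at h; exact absurd h (by simp)
    -- L4R2 : timeVar / timeConst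
    · have hLA : wL ∈ A := hLA'.elim id (fun h => hlA h)
      have he : ∀ σ ∈ U, σ wL = (Tm.timeConst (nR - jL)).applySubst σ := by
        intro σ hσ
        have h0 := hstar σ hσ
        rw [hl', hr'] at h0
        exact eq_timeConst_of_shift h0
      obtain ⟨g', happ⟩ := step g (le_refl D) (Or.inl hLr) he
        (Or.inr (Or.inl ⟨nR - jL, rfl, hLr⟩))
        (fun h => absurd h (by rw [hLr]; simp)) g.dem
      refine ⟨_, D, g', ?_, ?_, ?_⟩
      · rw [happ l, happ r, hl', hr']
        simp [repl, Tm.shift]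
      · intro t1 t2 h; rw [happ t1, happ t2, h]
      · refine lic_after r ?_ ?_
        · intro w d h; exact absurd h (by simp)
        · intro w m h; rw [hr'] at h; exact absurd h (by simp)
    -- L4R3 : timeVar / var  (demote wL and merge)
    · have hLA : wL ∈ A := hLA'.elim id (fun h => hlA h)
      have hne : wR ≠ wL := by
        intro h
        rw [h] at hRr
        exact absurd (hRr.symm.trans hLr) (by simp)
      have hinertL : ∀ σ ∈ U, inert (σ wL) := by
        intro σ hσ
        have h0 := hstar σ hσ
        rw [hl', hr'] at h0
        have h0' : (σ wL).shift jL = σ wR := h0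
        have h1 : inert ((σ wL).shift jL) := by
          rw [h0']; exact g.dem wR hRD σ hσ
        exact inert_of_inert_shift h1
      have he : ∀ σ ∈ U, σ wL = (Tm.var wR).applySubst σ := by
        intro σ hσ
        have h0 := hstar σ hσ
        rw [hl', hr'] at h0
        have h0' : (σ wL).shift jL = σ wR := h0
        have h1 : (σ wL).shift jL = σ wL := hinertL σ hσ jL
        show σ wL = σ wR
        rw [← h0', h1]
      have hdem' : ∀ v ∈ D ∪ {wL}, ∀ σ ∈ U, inert (σ v) := by
        intro v hv σ hσ
        rcases hv with hv | hv
        · exact g.dem v hv σ hσ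
        · have : v = wL := hv
          rw [this]; exact hinertL σ hσ
      obtain ⟨g', happ⟩ := step g Set.subset_union_left (Or.inl hLr) he
        (Or.inr (Or.inr (Or.inl ⟨wR, rfl, hRA, Set.mem_union_left _ hRD, fun _ => hRr⟩)))
        (fun _ => inert_var wR) hdem'
      refine ⟨_, D ∪ {wL}, g', ?_, ?_, ?_⟩
      · rw [happ l, happ r, hl', hr']; simp [repl, if_neg hne, Tm.shift]
      · intro t1 t2 h; rw [happ t1, happ t2, h]
      · refine lic_after r ?_ ?_
        · intro w d h; exact absurd h (by simp)
        · intro w m h; rw [hr'] at h; exact absurd h (by simp)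
    -- L4R4 : timeVar / timeVar
    · have hLA : wL ∈ A := hLA'.elim id (fun h => hlA h)
      by_cases hww : wL = wR
      · -- same root : demotion (offsets must differ since l' ≠ r')
        have hjm : jL ≠ mR := by
          intro h
          exact hlr (by rw [hl', hr', hww, h])
        have hinertL : ∀ σ ∈ U, inert (σ wL) := by
          intro σ hσ
          have h0 := hstar σ hσ
          rw [hl', hr'] at h0
          rw [← hww] at h0
          have h0' : (σ wL).shift jL = (σ wL).shift mR := h0
          exact inert_of_shift_eq hjm h0'
        have he : ∀ σ ∈ U, σ wL = (Tm.var wL).applySubst σ := fun σ _ => rfl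
        have hdem' : ∀ v ∈ D ∪ {wL}, ∀ σ ∈ U, inert (σ v) := by
          intro v hv σ hσ
          rcases hv with hv | hv
          · exact g.dem v hv σ hσ
          · have : v = wL := hv
            rw [this]; exact hinertL σ hσ
        obtain ⟨g', happ⟩ := step (D' := D ∪ {wL}) g Set.subset_union_left (Or.inl hLr) he
          (Or.inr (Or.inr (Or.inl ⟨wL, rfl, hLA, Set.mem_union_right D (Set.mem_singleton wL),
            fun hne => absurd rfl hne⟩)))
          (fun _ => inert_var wL) hdem'
        refine ⟨_, D ∪ {wL}, g', ?_, ?_, ?_⟩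
        · rw [happ l, happ r, hl', hr', ← hww]; simp [repl, Tm.shift]
        · intro t1 t2 h; rw [happ t1, happ t2, h]
        · refine lic_after r ?_ ?_
          · intro w d h
            obtain ⟨h1, -⟩ : wL = w ∧ (0 : ℤ) = d := by simpa using h
            exact h1 ▸ hLA
          · intro w m h; rw [hr'] at h
            obtain ⟨h1, -⟩ : wR = w ∧ mR = m := by simpa using h
            exact Or.inr (h1 ▸ hww).symm
      · by_cases hRA2 : wR ∈ A
        · -- bind wL := timeVar wR (mR - jL)
          have he : ∀ σ ∈ U, σ wL = (Tm.timeVar wR (mR - jL)).applySubst σ := by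
            intro σ hσ
            have h0 := hstar σ hσ
            rw [hl', hr'] at h0
            exact shift_cancel h0
          obtain ⟨g', happ⟩ := step g (le_refl D) (Or.inl hLr) he
            (Or.inr (Or.inr (Or.inr ⟨wR, mR - jL, rfl, hRA2, fun h => hww h.symm, hRr⟩)))
            (fun h => absurd h (by rw [hLr]; simp)) g.dem
          refine ⟨_, D, g', ?_, ?_, ?_⟩
          · rw [happ l, happ r, hl', hr']
            have hne : ¬ wR = wL := fun h => hww h.symm
            simp [repl, Tm.shift, hne]
          · intro t1 t2 h; rw [happ t1, happ t2, h]
          · refine lic_after r ?_ ?_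
            · intro w d h
              obtain ⟨h1, -⟩ : wR = w ∧ mR - jL = d := by simpa using h
              exact h1 ▸ hRA2
            · intro w m h; rw [hr'] at h
              obtain ⟨h1, -⟩ : wR = w ∧ mR = m := by simpa using h
              exact Or.inl (h1 ▸ hRA2)
        · -- bind wR := timeVar wL (jL - mR)
          have he : ∀ σ ∈ U, σ wR = (Tm.timeVar wL (jL - mR)).applySubst σ := by
            intro σ hσ
            have h0 := hstar σ hσ
            rw [hl', hr'] at h0
            exact shift_cancel h0.symm
          obtain ⟨g', happ⟩ := step g (le_refl D) (Or.inl hRr) he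
            (Or.inr (Or.inr (Or.inr ⟨wL, jL - mR, rfl, hLA, hww, hLr⟩)))
            (fun h => absurd h (by rw [hRr]; simp)) g.dem
          refine ⟨_, D, g', ?_, ?_, ?_⟩
          · rw [happ l, happ r, hl', hr']
            simp [repl, Tm.shift, hww]
          · intro t1 t2 h; rw [happ t1, happ t2, h]
          · refine lic_after r ?_ ?_
            · intro w d h
              obtain ⟨h1, -⟩ : wL = w ∧ jL - mR = d := by simpa using h
              exact h1 ▸ hLA
            · intro w m h; rw [hr'] at h
              obtain ⟨h1, -⟩ : wR = w ∧ mR = m := by simpa using h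
              exact Or.inr h1.symm


lemma relic {θ : Subst} {D lic lic' : Set ℕ} (g : Good sortOf A Rel U θ D lic)
    (h : ∀ v, θ v = .timeVar v 0 → v ∈ lic → v ∈ A ∨ v ∈ lic') :
    Good sortOf A Rel U θ D lic' := by
  refine ⟨?_, g.pro, g.ent, g.dem⟩
  intro v
  rcases g.shape v with h1 | ⟨h2, hl⟩ | h3 | h4 | h5 | h6
  · exact Or.inl h1
  · rcases hl with hA | hlic
    · exact Or.inr (Or.inl ⟨h2, Or.inl hA⟩)
    · exact Or.inr (Or.inl ⟨h2, h v h2 hlic⟩)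
  · exact Or.inr (Or.inr (Or.inl h3))
  · exact Or.inr (Or.inr (Or.inr (Or.inl h4)))
  · exact Or.inr (Or.inr (Or.inr (Or.inr (Or.inl h5))))
  · exact Or.inr (Or.inr (Or.inr (Or.inr (Or.inr h6))))

end Main

def rhsVars (ps : List (Tm × Tm)) : Set ℕ := {v | ∃ pr ∈ ps, v ∈ pr.2.vars}

lemma rhsVars_nil : rhsVars ([] : List (Tm × Tm)) = (∅ : Set ℕ) := by
  ext v; simp [rhsVars]

lemma mem_rhsVars_cons {v : ℕ} {hd : Tm × Tm} {tl : List (Tm × Tm)} :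
    v ∈ rhsVars (hd :: tl) ↔ v ∈ hd.2.vars ∨ v ∈ rhsVars tl := by
  simp [rhsVars]

section Main2

variable {sortOf : ℕ → Bool} {A Rel : Set ℕ} {U : Set Subst}

lemma main {σ₀ : Subst} (hσ₀ : σ₀ ∈ U) (hAR : A ⊆ Rel) :
    ∀ (ps : List (Tm × Tm)) (θ : Subst) (D : Set ℕ),
    Good sortOf A Rel U θ D (rhsVars ps) →
    (∀ pr ∈ ps, pr.1.vars ⊆ A ∧ pr.2.vars ⊆ Rel) →
    (∀ pr ∈ ps, ∀ σ ∈ U, pr.1.applySubst σ = pr.2.applySubst σ) →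
    ∃ (θf : Subst) (Df : Set ℕ), Good sortOf A Rel U θf Df ∅ ∧
      (∀ pr ∈ ps, pr.1.applySubst θf = pr.2.applySubst θf) ∧
      (∀ t1 t2 : Tm, t1.applySubst θ = t2.applySubst θ →
        t1.applySubst θf = t2.applySubst θf) := by
  intro ps
  induction ps with
  | nil =>
    intro θ D g _ _
    rw [rhsVars_nil] at g
    exact ⟨θ, D, g, fun pr hpr => absurd hpr (List.not_mem_nil (a := pr)), fun t1 t2 h => h⟩
  | cons hd tl ih =>
    intro θ D g hvars hUeq
    obtain ⟨θ', D', g', heq, hfac, hlicA⟩ :=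
      process g hσ₀ hAR hd.1 hd.2
        (hvars hd (List.mem_cons_self (a := hd) (l := tl))).1
        (hvars hd (List.mem_cons_self (a := hd) (l := tl))).2
        (hUeq hd (List.mem_cons_self (a := hd) (l := tl)))
    have g'' : Good sortOf A Rel U θ' D' (rhsVars tl) := by
      refine relic g' ?_
      intro v hv hl
      rcases mem_rhsVars_cons.1 hl with h | h
      · exact Or.inl (hlicA v h hv)
      · exact Or.inr h
    obtain ⟨θf, Df, gf, hunif, hfacf⟩ := ih θ' D' g''
      (fun pr hpr => hvars pr (List.mem_cons_of_mem hd hpr))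
      (fun pr hpr => hUeq pr (List.mem_cons_of_mem hd hpr))
    refine ⟨θf, Df, gf, ?_, ?_⟩
    · intro pr hpr
      rcases List.mem_cons.1 hpr with h | h
      · rw [h]
        exact hfacf hd.1 hd.2 heq
      · exact hunif pr h
    · intro t1 t2 h
      exact hfacf t1 t2 (hfac t1 t2 h)

end Main2


lemma map_eq_zip₁ {l1 l2 : List Tm} {f g : Tm → Tm} (h : l1.map f = l2.map g) :
    ∀ pr ∈ l1.zip l2, f pr.1 = g pr.2 := by
  induction l1 generalizing l2 with
  | nil => intro pr hpr; simp at hpr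
  | cons a t ih =>
    cases l2 with
    | nil => intro pr hpr; simp at hpr
    | cons b t2 =>
      simp only [List.map, List.cons.injEq] at h
      intro pr hpr
      rcases List.mem_cons.1 hpr with h1 | h1
      · rw [h1]; exact h.1
      · exact ih h.2 pr h1

lemma map_eq_of_zip {l1 l2 : List Tm} {f g : Tm → Tm} (hlen : l1.length = l2.length)
    (h : ∀ pr ∈ l1.zip l2, f pr.1 = g pr.2) : l1.map f = l2.map g := by
  induction l1 generalizing l2 with
  | nil =>
    cases l2 with
    | nil => rfl
    | cons b t2 => simp at hlen
  | cons a t ih =>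
    cases l2 with
    | nil => simp at hlen
    | cons b t2 =>
      simp only [List.map, List.cons.injEq]
      refine ⟨h (a, b) (List.mem_cons_self), ih (by simpa using hlen) ?_⟩
      intro pr hpr
      exact h pr (List.mem_cons_of_mem _ hpr)

end MguAux

open MguAux in
/-- Lemma 1 (mgu normalization): for unifiable atoms `α`, `β` with disjoint
variables, there is an mgu `θ` all of whose binding terms only use variables
occurring in `α`. -/
theorem stmt_4 (sortOf : ℕ → Bool) (α β : Atom)
    (hdisj : ∀ v, v ∈ α.vars → v ∉ β.vars)
    (hunif : ∃ θ : Subst, IsUnifier θ α β) :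
    ∃ θ : Subst, IsMgu θ α β ∧
      ∀ v : ℕ, θ v ≠ idTm sortOf v → (θ v).vars ⊆ α.vars := by
  classical
  obtain ⟨σ₀, hσ₀⟩ := hunif
  set U : Set Subst := {σ | IsUnifier σ α β} with hUdef
  have hσ₀U : σ₀ ∈ U := hσ₀
  have hσ₀' : α.applySubst σ₀ = β.applySubst σ₀ := hσ₀
  have hpred : α.pred = β.pred := by
    have := congrArg Atom.pred hσ₀'
    simpa [Atom.applySubst] using this
  have hmap : α.args.map (Tm.applySubst σ₀) = β.args.map (Tm.applySubst σ₀) := by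
    have := congrArg Atom.args hσ₀'
    simpa [Atom.applySubst] using this
  have hlen : α.args.length = β.args.length := by
    have := congrArg List.length hmap
    simpa using this
  set ps : List (Tm × Tm) := α.args.zip β.args with hps
  set A : Set ℕ := α.vars with hA
  set Rel : Set ℕ := A ∪ rhsVars ps with hRel
  have hAR : A ⊆ Rel := Set.subset_union_left
  set θ0 : Subst := fun v => if v ∈ Rel then Tm.timeVar v 0 else idTm sortOf v with hθ0
  have g0 : Good sortOf A Rel U θ0 ∅ (rhsVars ps) := by
    constructor
    · intro v
      by_cases hv : v ∈ Rel
      · refine Or.inr (Or.inl ⟨by simp [θ0, hv], ?_⟩)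
        rcases hv with h | h
        · exact Or.inl h
        · exact Or.inr h
      · exact Or.inl (by simp [θ0, hv])
    · intro v hv hv'
      exfalso
      have hid : θ0 v = Tm.timeVar v 0 := by simp [θ0, hv]
      rw [hv'] at hid
      exact absurd hid (by simp)
    · intro σ hσ v
      by_cases hv : v ∈ Rel
      · have hid : θ0 v = Tm.timeVar v 0 := by simp [θ0, hv]
        rw [hid]
        show σ v = (σ v).shift 0
        rw [shift_zero]
      · have hid : θ0 v = idTm sortOf v := by simp [θ0, hv]
        rw [hid, applySubst_idTm]
    · intro v hv
      exact absurd hv (Set.notMem_empty v)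
  have hvars : ∀ pr ∈ ps, pr.1.vars ⊆ A ∧ pr.2.vars ⊆ Rel := by
    intro pr hpr
    have hmem : pr.1 ∈ α.args ∧ pr.2 ∈ β.args := List.of_mem_zip (by simpa using hpr)
    constructor
    · intro v hv
      exact ⟨pr.1, hmem.1, hv⟩
    · intro v hv
      exact Set.mem_union_right _ ⟨pr, hpr, hv⟩
  have hUeq : ∀ pr ∈ ps, ∀ σ ∈ U, pr.1.applySubst σ = pr.2.applySubst σ := by
    intro pr hpr σ hσ
    have hσ' : α.applySubst σ = β.applySubst σ := hσ
    have hm : α.args.map (Tm.applySubst σ) = β.args.map (Tm.applySubst σ) := by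
      have := congrArg Atom.args hσ'
      simpa [Atom.applySubst] using this
    exact map_eq_zip₁ hm pr hpr
  obtain ⟨θf, Df, gf, hunifps, hfacf⟩ := main hσ₀U hAR ps θ0 ∅ g0 hvars hUeq
  have hargs : α.args.map (Tm.applySubst θf) = β.args.map (Tm.applySubst θf) :=
    map_eq_of_zip hlen (fun pr hpr => hunifps pr hpr)
  have hunifier : IsUnifier θf α β := by
    show Atom.mk α.pred (α.args.map (Tm.applySubst θf)) =
      Atom.mk β.pred (β.args.map (Tm.applySubst θf))
    rw [hpred, hargs]
  refine ⟨θf, ⟨hunifier, ?_⟩, ?_⟩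
  · intro σ hσ
    exact ⟨σ, funext fun v => gf.ent σ hσ v⟩
  · intro v hv
    rcases gf.shape v with h1 | ⟨h2, hl⟩ | ⟨c, h⟩ | ⟨n, h⟩ | ⟨w, h, hwA, _, _⟩ | ⟨w, k, h, hwA, _⟩
    · exact absurd h1 hv
    · rcases hl with h | h
      · rw [h2]
        intro x hx
        have : x = v := by simpa [Tm.vars] using hx
        rw [this]
        exact h
      · exact absurd h (Set.notMem_empty v)
    · rw [h]
      intro x hx
      simp [Tm.vars] at hx
    · rw [h]
      intro x hx
      simp [Tm.vars] at hx
    · rw [h]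
      intro x hx
      have : x = w := by simpa [Tm.vars] using hx
      rw [this]
      exact hwA
    · rw [h]
      intro x hx
      have : x = w := by simpa [Tm.vars] using hx
      rw [this]
      exact hwA
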